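/- Let N be a chain complex of R-modules and M an R-module. Then N lies in the subprojectivity domain of the complex ⊕_{n∈Z} \overline{M}[n] if and only if N lies in the subprojectivity domain of \overline{M}[n] for every integer n, if and only if N_n lies in the subprojectivity domain of M (in the category of modules) for every integer n. -/

import Mathlib

open CategoryTheory CategoryTheory.Limits

universe u

def SubprojDomain {A : Type*} [Category A] (M N : A) : Prop :=
  ∀ f : M ⟶ N, ∃ (P : A) (_ : Projective P) (a : M ⟶ P) (b : P ⟶ N), a ≫ b = f

def disc {R : Type u} [Ring R] (N : ModuleCat.{u} R) (n : ℤ) :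
    ChainComplex (ModuleCat.{u} R) ℤ where
  X i := if i = n + 1 ∨ i = n then N else ModuleCat.of R PUnit
  d i j :=
    if h : i = n + 1 ∧ j = n then
      eqToHom (if_pos (Or.inl h.1)) ≫ eqToHom (if_pos (Or.inr h.2)).symm
    else 0
  shape i j h := by
    try dsimp only
    rw [dif_neg]
    rintro ⟨rfl, rfl⟩
    exact h rfl
  d_comp_d' i j k hij hjk := by
    simp only [ComplexShape.down_Rel] at hij hjk
    try dsimp only
    by_cases hc : j = n + 1 ∧ k = n
    · rw [dif_neg (by omega), zero_comp]
    · rw [dif_neg hc, comp_zero]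

section Aux

variable {R : Type u} [Ring R]

lemma disc_X_eq (M : ModuleCat.{u} R) (n i : ℤ) (h : i = n + 1 ∨ i = n) :
    (disc M n).X i = M := if_pos h

lemma disc_isZero (M : ModuleCat.{u} R) (n i : ℤ) (h : ¬(i = n + 1 ∨ i = n)) :
    IsZero ((disc M n).X i) := by
  dsimp [disc]
  rw [if_neg h]
  exact ModuleCat.isZero_of_subsingleton _

lemma disc_d_eq (M : ModuleCat.{u} R) (n : ℤ) :
    (disc M n).d (n + 1) n =
      eqToHom (disc_X_eq M n _ (Or.inl rfl)) ≫ eqToHom (disc_X_eq M n _ (Or.inr rfl)).symm := by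
  dsimp [disc]
  rw [dif_pos ⟨rfl, rfl⟩]

lemma disc_d_eq_zero (M : ModuleCat.{u} R) (n i j : ℤ) (h : ¬(i = n + 1 ∧ j = n)) :
    (disc M n).d i j = 0 := by
  dsimp [disc]
  rw [dif_neg h]
  rfl

/-- A chain map out of a disc, given a module map out of the top. -/
def discDesc (M : ModuleCat.{u} R) (n : ℤ) (N : ChainComplex (ModuleCat.{u} R) ℤ)
    (g : M ⟶ N.X (n + 1)) : disc M n ⟶ N where
  f i :=
    if h : i = n + 1 then
      eqToHom (disc_X_eq M n i (Or.inl h)) ≫ g ≫ eqToHom (congrArg N.X h.symm)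
    else if h' : i = n then
      eqToHom (disc_X_eq M n i (Or.inr h')) ≫ g ≫ N.d (n + 1) n ≫ eqToHom (congrArg N.X h'.symm)
    else 0
  comm' i j hij := by
    simp only [ComplexShape.down_Rel] at hij
    subst hij
    by_cases h : j = n
    · subst h
      rw [dif_pos rfl, dif_neg (by omega), dif_pos rfl, disc_d_eq]
      simp
    · by_cases h2 : j + 1 = n
      · obtain rfl : n = j + 1 := h2.symm
        rw [dif_neg (by omega), dif_pos rfl, dif_neg (by omega), dif_neg (by omega),
          disc_d_eq_zero _ _ _ _ (by omega)]
        simp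
      · rw [dif_neg (by omega), dif_neg h2, disc_d_eq_zero _ _ _ _ (by omega)]
        simp

lemma discDesc_f_top (M : ModuleCat.{u} R) (n : ℤ) (N : ChainComplex (ModuleCat.{u} R) ℤ)
    (g : M ⟶ N.X (n + 1)) :
    (discDesc M n N g).f (n + 1) = eqToHom (disc_X_eq M n _ (Or.inl rfl)) ≫ g := by
  dsimp [discDesc]
  rw [dif_pos rfl]
  simp

/-- Two chain maps out of a disc agree if they agree on the top. -/
lemma disc_hom_ext {M : ModuleCat.{u} R} {n : ℤ} {N : ChainComplex (ModuleCat.{u} R) ℤ}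
    (φ ψ : disc M n ⟶ N) (h : φ.f (n + 1) = ψ.f (n + 1)) : φ = ψ := by
  apply HomologicalComplex.hom_f_injective
  funext i
  by_cases h1 : i = n + 1
  · subst h1; exact h
  by_cases h2 : i = n
  · subst h2
    have hφ := φ.comm (i + 1) i
    have hψ := ψ.comm (i + 1) i
    haveI he : Epi ((disc M i).d (i + 1) i) := by
      rw [disc_d_eq]
      infer_instance
    rw [← cancel_epi ((disc M i).d (i + 1) i), ← hφ, ← hψ, h]
  · exact (disc_isZero M n i (by tauto)).eq_of_src _ _

/-- A chain map into a disc, given a module map from the `n`-th object. -/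
def toDisc (C : ChainComplex (ModuleCat.{u} R) ℤ) (A : ModuleCat.{u} R) (n : ℤ)
    (u : C.X n ⟶ A) : C ⟶ disc A n where
  f i :=
    if h : i = n + 1 then
      eqToHom (congrArg C.X h) ≫ C.d (n + 1) n ≫ u ≫ eqToHom (disc_X_eq A n i (Or.inl h)).symm
    else if h' : i = n then
      eqToHom (congrArg C.X h') ≫ u ≫ eqToHom (disc_X_eq A n i (Or.inr h')).symm
    else 0
  comm' i j hij := by
    simp only [ComplexShape.down_Rel] at hij
    subst hij
    by_cases h : j = n
    · subst h
      rw [dif_pos rfl, dif_neg (by omega), dif_pos rfl, disc_d_eq]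
      simp
    · by_cases h2 : j + 1 = n
      · obtain rfl : n = j + 1 := h2.symm
        rw [dif_neg (by omega), dif_pos rfl, dif_neg (by omega), dif_neg (by omega),
          disc_d_eq_zero _ _ _ _ (by omega)]
        simp
      · rw [dif_neg (by omega), dif_neg h2, disc_d_eq_zero _ _ _ _ (by omega)]
        by_cases h3 : j = n + 1
        · subst h3
          rw [dif_pos rfl]
          simp
        · rw [dif_neg h3, dif_neg h]
          simp

lemma toDisc_f_n (C : ChainComplex (ModuleCat.{u} R) ℤ) (A : ModuleCat.{u} R) (n : ℤ)
    (u : C.X n ⟶ A) :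
    (toDisc C A n u).f n = u ≫ eqToHom (disc_X_eq A n n (Or.inr rfl)).symm := by
  dsimp [toDisc]
  rw [dif_neg (by omega), dif_pos rfl]
  simp

/-- Discs on projective modules are projective complexes. -/
lemma disc_projective (P : ModuleCat.{u} R) (n : ℤ) (hP : Projective P) :
    Projective (disc P n) where
  factors {E X} f e he := by
    obtain ⟨l, hl⟩ := hP.factors
      (eqToHom (disc_X_eq P n (n + 1) (Or.inl rfl)).symm ≫ f.f (n + 1)) (e.f (n + 1))
    refine ⟨discDesc P n E l, disc_hom_ext _ _ ?_⟩
    rw [HomologicalComplex.comp_f, discDesc_f_top]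
    rw [Category.assoc, hl]
    simp

/-- The components of a projective complex are projective modules. -/
lemma eval_projective (Q : ChainComplex (ModuleCat.{u} R) ℤ) (hQ : Projective Q) (n : ℤ) :
    Projective (Q.X n) where
  factors {E X} u e he := by
    -- epi between discs
    set ebar : disc E n ⟶ disc X n :=
      discDesc E n (disc X n) (e ≫ eqToHom (disc_X_eq X n (n + 1) (Or.inl rfl)).symm) with hebar
    haveI hepi : Epi ebar := by
      apply HomologicalComplex.epi_of_epi_f
      intro i
      by_cases h1 : i = n + 1
      · subst h1
        rw [hebar, discDesc_f_top]
        infer_instance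
      by_cases h2 : i = n
      · subst h2
        dsimp [ebar, discDesc]
        rw [dif_neg (by omega), dif_pos rfl, disc_d_eq]
        infer_instance
      · refine ⟨fun g h _ => (disc_isZero X n i (by tauto)).eq_of_src _ _⟩
    obtain ⟨L, hL⟩ := hQ.factors (toDisc Q X n u) ebar
    refine ⟨L.f n ≫ eqToHom (disc_X_eq E n n (Or.inr rfl)), ?_⟩
    have hcomp := congrArg (fun φ => HomologicalComplex.Hom.f φ n) hL
    dsimp at hcomp
    rw [toDisc_f_n] at hcomp
    have hef : ebar.f n =
        eqToHom (disc_X_eq E n n (Or.inr rfl)) ≫ e ≫ eqToHom (disc_X_eq X n n (Or.inr rfl)).symm := by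
      dsimp [ebar, discDesc]
      rw [dif_neg (by omega), dif_pos rfl, disc_d_eq]
      simp
    rw [hef] at hcomp
    rw [← cancel_mono (eqToHom (disc_X_eq X n n (Or.inr rfl)).symm)]
    simpa using hcomp

lemma sigma_projective {C : Type*} [Category C] {β : Type*} (g : β → C) [HasCoproduct g]
    (h : ∀ b, Projective (g b)) : Projective (∐ g) where
  factors {E X} f e he := by
    have := fun b => (h b).factors (Sigma.ι g b ≫ f) e
    choose l hl using this
    exact ⟨Sigma.desc l, Sigma.hom_ext _ _ (by simp [hl])⟩

end Aux

set_option maxHeartbeats 1000000 in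
set_option synthInstance.maxHeartbeats 400000 in
/-- `N` lies in the subprojectivity domain of `⊕_{n∈ℤ} \overline{M}[n]` iff
it lies in the subprojectivity domain of every disc `\overline{M}[n]`, iff `N_n` lies in
the subprojectivity domain of the module `M` for every `n`. -/
theorem subprojDomain_sigma_disc_tfae
    {R : Type u} [Ring R] (N : ChainComplex (ModuleCat.{u} R) ℤ) (M : ModuleCat.{u} R) :
    (SubprojDomain (∐ fun n : ℤ => disc M n) N ↔
      ∀ n : ℤ, SubprojDomain (disc M n) N) ∧
    ((∀ n : ℤ, SubprojDomain (disc M n) N) ↔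
      ∀ n : ℤ, SubprojDomain M (N.X n)) := by
  constructor
  · constructor
    · intro hS n g
      obtain ⟨P, hP, a, b, hab⟩ := hS (Sigma.desc fun m =>
        if h : m = n then eqToHom (by rw [h]) ≫ g else 0)
      refine ⟨P, hP, Sigma.ι (fun m : ℤ => disc M m) n ≫ a, b, ?_⟩
      rw [Category.assoc, hab]
      simp
    · intro hall f
      choose P hP a b hab using fun n => hall n (Sigma.ι (fun m : ℤ => disc M m) n ≫ f)
      haveI : HasCoproduct P := inferInstance
      refine ⟨∐ P, sigma_projective P hP, Limits.Sigma.map a, Sigma.desc b, ?_⟩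
      apply Sigma.hom_ext
      intro n
      simp [hab]
  · constructor
    · intro hall n g
      obtain ⟨Q, hQ, a, b, hab⟩ := hall (n - 1)
        (discDesc M (n - 1) N (g ≫ eqToHom (congrArg N.X (by omega))))
      refine ⟨Q.X n, eval_projective Q hQ n,
        eqToHom (disc_X_eq M (n - 1) n (Or.inl (by omega))).symm ≫ a.f n, b.f n, ?_⟩
      have hcomp := congrArg (fun φ => HomologicalComplex.Hom.f φ n) hab
      dsimp at hcomp
      have hd : (discDesc M (n - 1) N (g ≫ eqToHom (congrArg N.X (by omega : (n:ℤ) = n - 1 + 1)))).f n =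
          eqToHom (disc_X_eq M (n - 1) n (Or.inl (by omega))) ≫ g := by
        dsimp [discDesc]
        rw [dif_pos (by omega : (n:ℤ) = n - 1 + 1)]
        simp
      rw [hd] at hcomp
      rw [Category.assoc, hcomp]
      simp
    · intro hall n f
      obtain ⟨P, hP, a, b, hab⟩ := hall (n + 1)
        (eqToHom (disc_X_eq M n (n + 1) (Or.inl rfl)).symm ≫ f.f (n + 1))
      refine ⟨disc P n, disc_projective P n hP,
        discDesc M n (disc P n) (a ≫ eqToHom (disc_X_eq P n (n + 1) (Or.inl rfl)).symm),
        discDesc P n N b, ?_⟩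
      apply disc_hom_ext
      rw [HomologicalComplex.comp_f, discDesc_f_top, discDesc_f_top]
      rw [← cancel_epi (eqToHom (disc_X_eq M n (n + 1) (Or.inl rfl)).symm)]
      simp [hab]
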